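/- Let A be a Noetherian K-algebra, V a finite dimensional irreducible left A-module annihilated by a normal element x of A (i.e., xA = Ax and xV = 0), and let E be a finitely generated essential extension of V such that x^n E = 0 for some n ≥ 1. Define f: E → E by f(m) = x m. Then there is a finite filtration 0 ⊆ ker f ⊆ ker f² ⊆ ... ⊆ ker fⁿ = E by A-submodules, and E is finite dimensional over K if and only if ker f = Ann_E(x) is finite dimensional over K. -/
import Mathlib


/-- A submodule is essential if it meets every nonzero submodule nontrivially. -/
def EssSub {A M : Type*} [Ring A] [AddCommGroup M] [Module A M]
    (N : Submodule A M) : Prop :=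
  ∀ P : Submodule A M, P ⊓ N = ⊥ → P = ⊥

theorem stmt6 (K A : Type*) [Field K] [Ring A] [Algebra K A] [IsNoetherianRing A]
    (E : Type*) [AddCommGroup E] [Module A E] [Module K E] [IsScalarTower K A E]
    [Module.Finite A E]
    (x : A)
    (hnorm : (∀ a : A, ∃ b : A, x * a = b * x) ∧ ∀ a : A, ∃ b : A, a * x = x * b)
    (V : Submodule A E) (hVess : EssSub V) (hVsimple : IsSimpleModule A V)
    (hVfin : FiniteDimensional K (V.restrictScalars K))
    (hxV : ∀ v ∈ V, x • v = 0)
    (n : ℕ) (hn : 1 ≤ n) (hxE : ∀ m : E, x ^ n • m = 0) :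
    (∃ p : ℕ → Submodule A E,
        (∀ k, (p k : Set E) = {m : E | x ^ k • m = 0}) ∧ Monotone p ∧ p n = ⊤) ∧
    (∀ q : Submodule A E, (q : Set E) = {m : E | x • m = 0} →
      (FiniteDimensional K E ↔ FiniteDimensional K (q.restrictScalars K))) := by
  -- powers of x are normal
  have hpow : ∀ (k : ℕ) (a : A), ∃ b : A, x ^ k * a = b * x ^ k := by
    intro k
    induction k with
    | zero => intro a; exact ⟨a, by simp⟩
    | succ k ih =>
      intro a
      obtain ⟨b, hb⟩ := ih a
      obtain ⟨c, hc⟩ := hnorm.1 b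
      exact ⟨c, by rw [pow_succ', mul_assoc, hb, ← mul_assoc, hc, mul_assoc, ← pow_succ']⟩
  -- the A-submodules ker (x^k •)
  have hP : ∀ k : ℕ, ∃ P : Submodule A E, (P : Set E) = {m : E | x ^ k • m = 0} := by
    intro k
    refine ⟨{ carrier := {m : E | x ^ k • m = 0}
              add_mem' := ?_
              zero_mem' := by simp
              smul_mem' := ?_ }, rfl⟩
    · intro a b ha hb
      simp only [Set.mem_setOf_eq, smul_add] at *
      rw [ha, hb, add_zero]
    · intro a m hm
      obtain ⟨b, hb⟩ := hpow k a
      simp only [Set.mem_setOf_eq] at *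
      rw [smul_smul, hb, ← smul_smul, hm, smul_zero]
  choose p hp using hP
  constructor
  · refine ⟨p, hp, ?_, ?_⟩
    · apply monotone_nat_of_le_succ
      intro k m hm
      have hm' : x ^ k • m = 0 := by
        have h1 : m ∈ (p k : Set E) := hm
        rw [hp k] at h1
        exact h1
      have : m ∈ (p (k + 1) : Set E) := by
        rw [hp (k + 1)]
        show x ^ (k + 1) • m = 0
        rw [pow_succ', ← smul_smul, hm', smul_zero]
      exact this
    · apply Submodule.ext
      intro m
      simp only [Submodule.mem_top, iff_true]
      have : m ∈ (p n : Set E) := by rw [hp n]; exact hxE m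
      exact this
  · -- second part
    intro q hq
    constructor
    · intro _
      exact inferInstance
    · intro hqfin
      -- the K-linear map m ↦ x • m
      have hsmul : ∀ (c : K) (m : E), x • (c • m) = c • (x • m) := by
        intro c m
        rw [← algebraMap_smul A c m, smul_smul, ← Algebra.commutes, ← smul_smul,
          algebraMap_smul]
      set φ : E →ₗ[K] E :=
        { toFun := fun m => x • m
          map_add' := fun a b => smul_add x a b
          map_smul' := fun c m => hsmul c m } with hφ
      have hφk : ∀ (k : ℕ) (m : E), (φ ^ k) m = x ^ k • m := by
        intro k
        induction k with
        | zero => intro m; simp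
        | succ k ih =>
          intro m
          rw [pow_succ, Module.End.mul_apply, ih, hφ]
          show x ^ k • (x • m) = x ^ (k + 1) • m
          rw [smul_smul, ← pow_succ]
      have hker1 : LinearMap.ker φ = q.restrictScalars K := by
        ext m
        have : m ∈ (q : Set E) ↔ x • m = 0 := by rw [hq]; rfl
        simpa [LinearMap.mem_ker, hφ] using this.symm
      -- by induction, ker (φ^k) is finite dimensional
      have hfin : ∀ k : ℕ, FiniteDimensional K (LinearMap.ker (φ ^ k)) := by
        intro k
        induction k with
        | zero =>
          have h0 : LinearMap.ker (φ ^ 0) = ⊥ := by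
            ext m; simp [LinearMap.mem_ker]
          rw [h0]
          infer_instance
        | succ k ih =>
          have hle : LinearMap.ker (φ ^ k) ≤ LinearMap.ker (φ ^ (k + 1)) := by
            intro m hm
            simp only [LinearMap.mem_ker] at *
            rw [hφk] at hm ⊢
            rw [pow_succ', ← smul_smul, hm, smul_zero]
          set S := LinearMap.ker (φ ^ (k + 1)) with hS
          -- restriction of φ^k to S
          set g : S →ₗ[K] E := (φ ^ k).domRestrict S with hg
          have hkerg : LinearMap.ker g = Submodule.comap S.subtype (LinearMap.ker (φ ^ k)) := by
            ext m
            simp [hg, LinearMap.mem_ker]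
          have hrange : LinearMap.range g ≤ q.restrictScalars K := by
            rintro _ ⟨⟨m, hm⟩, rfl⟩
            rw [← hker1]
            simp only [LinearMap.mem_ker, hg, LinearMap.domRestrict_apply]
            have : (φ ^ (k + 1)) m = 0 := hm
            rw [pow_succ, Module.End.mul_apply] at this
            show φ ((φ ^ k) m) = 0
            have h2 : (φ ^ k) (φ m) = φ ((φ ^ k) m) := by
              have := (Commute.pow_self φ k).eq
              calc (φ ^ k) (φ m) = ((φ ^ k) * φ) m := rfl
                _ = (φ * (φ ^ k)) m := by rw [← pow_succ, ← pow_succ']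
                _ = φ ((φ ^ k) m) := rfl
            rw [← h2, this]
          -- rank computation
          have hrank := LinearMap.rank_range_add_rank_ker g
          have h1 : Module.rank K (LinearMap.range g) < Cardinal.aleph0 := by
            have := hqfin
            exact lt_of_le_of_lt (Submodule.rank_mono hrange)
              (Module.rank_lt_aleph0_iff.2 hqfin)
          have h2 : Module.rank K (LinearMap.ker g) < Cardinal.aleph0 := by
            rw [hkerg]
            rw [(Submodule.comapSubtypeEquivOfLe hle).rank_eq]
            exact Module.rank_lt_aleph0_iff.2 ih
          have : Module.rank K S < Cardinal.aleph0 := by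
            rw [← hrank]
            exact Cardinal.add_lt_aleph0 h1 h2
          exact Module.rank_lt_aleph0_iff.1 this
      -- ker (φ^n) = ⊤
      have htop : LinearMap.ker (φ ^ n) = ⊤ := by
        ext m
        simp only [LinearMap.mem_ker, Submodule.mem_top, iff_true, hφk]
        exact hxE m
      have := hfin n
      rw [htop] at this
      exact (Submodule.topEquiv : (⊤ : Submodule K E) ≃ₗ[K] E).finiteDimensional
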